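/- If the sequent p1/q1, …, p_{n-1}/q_{n-1}, p_n → s is derivable in L+(CS), where p1,…,pn, q1,…,q_{n-1} and s are primitive types, then there exists a permutation σ of {1,…,n−1} such that q_{σ(i)} = p_{σ(i+1)} for all i = 1,…,n−2, q_{σ(n−1)} = p_n, and p_{σ(1)} = s. -/

import Mathlib

/-- Types of the Lambek calculus `L` (and of `L+(CS)`), built from primitive
types `P` by `\` (`ldiv A B = A \ B`), `/` (`rdiv B A = B / A`) and `·`. -/
inductive Fm0 (P : Type) : Type
  | prim : P → Fm0 P
  | ldiv : Fm0 P → Fm0 P → Fm0 P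
  | rdiv : Fm0 P → Fm0 P → Fm0 P
  | mul  : Fm0 P → Fm0 P → Fm0 P
deriving DecidableEq

/-- Derivability of sequents in the calculus `L+(CS)`: the Lambek calculus
(with cut) extended with the structural rule (CS): from `Pi,Psi → A` infer
`Psi,Pi → A`. -/
inductive Dcs (P : Type) : List (Fm0 P) → Fm0 P → Prop
  | ax (A : Fm0 P) :
      Dcs P [A] A
  | ldivL (Γ Δ Pi : List (Fm0 P)) (A B C : Fm0 P) :
      Dcs P (Γ ++ B :: Δ) C → Dcs P Pi A → Pi ≠ [] →
      Dcs P (Γ ++ Pi ++ Fm0.ldiv A B :: Δ) C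
  | ldivR (Pi : List (Fm0 P)) (A B : Fm0 P) :
      Dcs P (A :: Pi) B → Pi ≠ [] →
      Dcs P Pi (Fm0.ldiv A B)
  | rdivL (Γ Δ Pi : List (Fm0 P)) (A B C : Fm0 P) :
      Dcs P (Γ ++ B :: Δ) C → Dcs P Pi A → Pi ≠ [] →
      Dcs P (Γ ++ Fm0.rdiv B A :: (Pi ++ Δ)) C
  | rdivR (Pi : List (Fm0 P)) (A B : Fm0 P) :
      Dcs P (Pi ++ [A]) B → Pi ≠ [] →
      Dcs P Pi (Fm0.rdiv B A)
  | mulL (Γ Δ : List (Fm0 P)) (A B C : Fm0 P) :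
      Dcs P (Γ ++ A :: B :: Δ) C →
      Dcs P (Γ ++ Fm0.mul A B :: Δ) C
  | mulR (Pi Psi : List (Fm0 P)) (A B : Fm0 P) :
      Dcs P Pi A → Dcs P Psi B → Pi ≠ [] → Psi ≠ [] →
      Dcs P (Pi ++ Psi) (Fm0.mul A B)
  | cs (Pi Psi : List (Fm0 P)) (A : Fm0 P) :
      Dcs P (Pi ++ Psi) A → Pi ≠ [] → Psi ≠ [] →
      Dcs P (Psi ++ Pi) A
  | cut (Γ Δ Pi : List (Fm0 P)) (A B : Fm0 P) :
      Dcs P Pi A → Dcs P (Γ ++ A :: Δ) B → Pi ≠ [] →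
      Dcs P (Γ ++ Pi ++ Δ) B

namespace LCSAux

variable {P : Type}

/-- The carrier of the commutative model: a multiset of primitive "outputs"
together with a multiset of edges. -/
abbrev M (P : Type) := Multiset P × Multiset (P × P)

/-- `Chain E s t`: the edges in `E` can be arranged into a path from `s` to `t`. -/
inductive Chain (P : Type) : Multiset (P × P) → P → P → Prop
  | nil (t : P) : Chain P 0 t t
  | cons (s q t : P) (E : Multiset (P × P)) :
      Chain P E q t → Chain P ((s, q) ::ₘ E) s t

/-- Interpretation of formulas as subsets of the commutative monoid `M P`. -/
def sem : Fm0 P → Set (M P)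
  | .prim r => {x | ∃ t E, x = ({t}, E) ∧ Chain P E r t}
  | .ldiv A B => {x | ∀ y ∈ sem A, y + x ∈ sem B}
  | .rdiv B A => {x | ∀ y ∈ sem A, x + y ∈ sem B}
  | .mul A B => {z | ∃ x ∈ sem A, ∃ y ∈ sem B, z = x + y}

/-- Interpretation of a list of formulas (sum of the elementwise values). -/
def Ssum : List (Fm0 P) → Set (M P)
  | [] => {(0 : M P)}
  | F :: l => {z | ∃ x ∈ sem F, ∃ y ∈ Ssum l, z = x + y}

@[simp] lemma mem_Ssum_nil {z : M P} : z ∈ Ssum ([] : List (Fm0 P)) ↔ z = 0 := Iff.rfl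

@[simp] lemma mem_Ssum_cons {z : M P} {F : Fm0 P} {l : List (Fm0 P)} :
    z ∈ Ssum (F :: l) ↔ ∃ x ∈ sem F, ∃ y ∈ Ssum l, z = x + y := Iff.rfl

lemma mem_Ssum_append {z : M P} {l₁ l₂ : List (Fm0 P)} :
    z ∈ Ssum (l₁ ++ l₂) ↔ ∃ x ∈ Ssum l₁, ∃ y ∈ Ssum l₂, z = x + y := by
  induction l₁ generalizing z with
  | nil =>
    constructor
    · intro hz; exact ⟨0, rfl, z, hz, (zero_add z).symm⟩
    · rintro ⟨x, hx, y, hy, rfl⟩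
      rw [show x = 0 from hx, zero_add]; exact hy
  | cons F l₁ ih =>
    constructor
    · rintro ⟨x, hx, y, hy, rfl⟩
      rcases ih.mp hy with ⟨a, ha, b, hb, rfl⟩
      exact ⟨x + a, ⟨x, hx, a, ha, rfl⟩, b, hb, by abel⟩
    · rintro ⟨u, ⟨x, hx, a, ha, rfl⟩, b, hb, rfl⟩
      exact ⟨x, hx, a + b, ih.mpr ⟨a, ha, b, hb, rfl⟩, by abel⟩

lemma mem_Ssum_singleton {z : M P} {A : Fm0 P} :
    z ∈ Ssum [A] ↔ z ∈ sem A := by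
  constructor
  · rintro ⟨x, hx, y, hy, rfl⟩
    simp only [mem_Ssum_nil] at hy
    subst hy; simpa using hx
  · intro hz; exact ⟨z, hz, 0, rfl, by abel⟩

theorem sound {l : List (Fm0 P)} {C : Fm0 P} (h : Dcs P l C) :
    ∀ z ∈ Ssum l, z ∈ sem C := by
  induction h with
  | ax A =>
    intro z hz; exact mem_Ssum_singleton.mp hz
  | ldivL Γ Δ Pi A B C h1 h2 hne ih1 ih2 =>
    intro z hz
    rw [mem_Ssum_append] at hz
    rcases hz with ⟨u, hu, d, hd, rfl⟩
    rw [mem_Ssum_append] at hu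
    rcases hu with ⟨g, hg, π, hπ, rfl⟩
    rcases hd with ⟨x, hx, d', hd', rfl⟩
    have hπA : π ∈ sem A := ih2 π hπ
    have hπx : π + x ∈ sem B := hx π hπA
    have : g + ((π + x) + d') ∈ Ssum (Γ ++ B :: Δ) :=
      mem_Ssum_append.mpr ⟨g, hg, (π + x) + d', ⟨π + x, hπx, d', hd', rfl⟩, rfl⟩
    have := ih1 _ this
    convert this using 1
    abel
  | ldivR Pi A B h hne ih =>
    intro z hz
    intro y hy
    exact ih (y + z) ⟨y, hy, z, hz, rfl⟩
  | rdivL Γ Δ Pi A B C h1 h2 hne ih1 ih2 =>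
    intro z hz
    rw [mem_Ssum_append] at hz
    rcases hz with ⟨g, hg, d, hd, rfl⟩
    rcases hd with ⟨x, hx, d', hd', rfl⟩
    rw [mem_Ssum_append] at hd'
    rcases hd' with ⟨π, hπ, e, he, rfl⟩
    have hπA : π ∈ sem A := ih2 π hπ
    have hxπ : x + π ∈ sem B := hx π hπA
    have : g + ((x + π) + e) ∈ Ssum (Γ ++ B :: Δ) :=
      mem_Ssum_append.mpr ⟨g, hg, (x + π) + e, ⟨x + π, hxπ, e, he, rfl⟩, rfl⟩
    have := ih1 _ this
    convert this using 1
    abel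
  | rdivR Pi A B h hne ih =>
    intro z hz
    intro y hy
    exact ih (z + y) (mem_Ssum_append.mpr ⟨z, hz, y, mem_Ssum_singleton.mpr hy, rfl⟩)
  | mulL Γ Δ A B C h ih =>
    intro z hz
    rw [mem_Ssum_append] at hz
    rcases hz with ⟨g, hg, d, hd, rfl⟩
    rcases hd with ⟨x, hx, d', hd', rfl⟩
    rcases hx with ⟨a, ha, b, hb, rfl⟩
    have : g + (a + (b + d')) ∈ Ssum (Γ ++ A :: B :: Δ) :=
      mem_Ssum_append.mpr ⟨g, hg, a + (b + d'), ⟨a, ha, b + d', ⟨b, hb, d', hd', rfl⟩, rfl⟩, rfl⟩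
    have := ih _ this
    convert this using 1
    abel
  | mulR Pi Psi A B h1 h2 hne1 hne2 ih1 ih2 =>
    intro z hz
    rw [mem_Ssum_append] at hz
    rcases hz with ⟨x, hx, y, hy, rfl⟩
    exact ⟨x, ih1 x hx, y, ih2 y hy, rfl⟩
  | cs Pi Psi A h hne1 hne2 ih =>
    intro z hz
    rw [mem_Ssum_append] at hz
    rcases hz with ⟨y, hy, x, hx, rfl⟩
    have : x + y ∈ Ssum (Pi ++ Psi) := mem_Ssum_append.mpr ⟨x, hx, y, hy, rfl⟩
    have := ih _ this
    convert this using 1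
    abel
  | cut Γ Δ Pi A B h1 h2 hne ih1 ih2 =>
    intro z hz
    rw [mem_Ssum_append] at hz
    rcases hz with ⟨u, hu, d, hd, rfl⟩
    rw [mem_Ssum_append] at hu
    rcases hu with ⟨g, hg, π, hπ, rfl⟩
    have hπA : π ∈ sem A := ih1 π hπ
    have hmem := ih2 _ (mem_Ssum_append.mpr ⟨g, hg, π + d, ⟨π, hπA, d, hd, rfl⟩, rfl⟩)
    convert hmem using 1
    abel

end LCSAux

namespace LCSAux

variable {P : Type} {α : Type*}

/-- `Linked l s t`: the list of edges `l` forms a path from `s` to `t`. -/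
def Linked : List (P × P) → P → P → Prop
  | [], s, t => s = t
  | (a, b) :: r, s, t => a = s ∧ Linked r b t

lemma chain_to_list {E : Multiset (P × P)} {s t : P} (h : Chain P E s t) :
    ∃ l : List (P × P), (l : Multiset (P × P)) = E ∧ Linked l s t := by
  induction h with
  | nil t => exact ⟨[], rfl, rfl⟩
  | cons s q t E h ih =>
    rcases ih with ⟨l, hl, hlink⟩
    exact ⟨(s, q) :: l, by rw [← Multiset.cons_coe, hl], rfl, hlink⟩

lemma linked_get_zero {l : List (P × P)} {s t : P} (h : Linked l s t)
    (hp : 0 < l.length) : (l.get ⟨0, hp⟩).1 = s := by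
  cases l with
  | nil => simp at hp
  | cons a r => obtain ⟨a1, a2⟩ := a; exact h.1

lemma linked_get_succ {l : List (P × P)} {s t : P} (h : Linked l s t) :
    ∀ i (h1 : i < l.length) (h2 : i + 1 < l.length),
      (l.get ⟨i, h1⟩).2 = (l.get ⟨i + 1, h2⟩).1 := by
  induction l generalizing s with
  | nil => intro i h1; simp at h1
  | cons a r ih =>
    obtain ⟨a1, a2⟩ := a
    obtain ⟨rfl, hr⟩ := h
    intro i h1 h2
    cases i with
    | zero =>
      have : (0 : ℕ) < r.length := by simpa using h2
      simpa using (linked_get_zero hr this).symm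
    | succ k =>
      have h1' : k < r.length := by simpa using h1
      have h2' : k + 1 < r.length := by simpa using h2
      simpa using ih hr k h1' h2'

lemma linked_get_last {l : List (P × P)} {s t : P} (h : Linked l s t) :
    ∀ i (h1 : i < l.length), i = l.length - 1 → (l.get ⟨i, h1⟩).2 = t := by
  induction l generalizing s with
  | nil => intro i h1; simp at h1
  | cons a r ih =>
    obtain ⟨a1, a2⟩ := a
    obtain ⟨rfl, hr⟩ := h
    intro i h1 hi
    cases r with
    | nil =>
      have : i = 0 := by simp only [List.length_cons, List.length_nil] at h1; omega
      subst this
      exact hr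
    | cons b r' =>
      cases i with
      | zero => simp at hi
      | succ k =>
        have h1' : k < (b :: r').length := by simpa using h1
        have hk : k = (b :: r').length - 1 := by
          simp only [List.length_cons] at hi ⊢
          omega
        simpa using ih hr k h1' hk

/-- Extracting a permutation from a permutation of `ofFn` lists. -/
lemma exists_perm_of_ofFn_perm :
    ∀ {m : ℕ} {f g : Fin m → α}, (List.ofFn g).Perm (List.ofFn f) →
      ∃ σ : Equiv.Perm (Fin m), g = f ∘ σ := by
  intro m
  induction m with
  | zero => intro f g _; exact ⟨Equiv.refl _, funext fun i => i.elim0⟩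
  | succ n ih =>
    intro f g h
    have hg0 : g 0 ∈ List.ofFn f := h.mem_iff.mp (by simp [List.mem_ofFn])
    rw [List.mem_ofFn] at hg0
    obtain ⟨j, hj⟩ := hg0
    set τ : Equiv.Perm (Fin (n + 1)) := Equiv.swap 0 j with hτ
    have hperm : (List.ofFn g).Perm (List.ofFn (f ∘ τ)) :=
      h.trans (Equiv.Perm.ofFn_comp_perm τ f).symm
    have hhead : (f ∘ τ) 0 = g 0 := by simp [hτ, hj]
    rw [List.ofFn_succ, List.ofFn_succ, ← hhead] at hperm
    have htail : (List.ofFn fun i : Fin n => g i.succ).Perm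
        (List.ofFn fun i : Fin n => (f ∘ τ) i.succ) := hperm.cons_inv
    obtain ⟨σ', hσ'⟩ := ih htail
    refine ⟨Equiv.Perm.decomposeFin.symm (j, σ'), funext fun i => ?_⟩
    refine Fin.cases ?_ (fun x => ?_) i
    · simp [hj.symm]
    · have := congrFun hσ' x
      simp only [Function.comp_apply] at this ⊢
      rw [this]
      simp [hτ]

end LCSAux

namespace LCSAux

variable {P : Type}

lemma ssum_ofFn : ∀ {k : ℕ} (F : Fin k → Fm0 P) (x : Fin k → M P),
    (∀ i, x i ∈ sem (F i)) → (List.ofFn x).sum ∈ Ssum (List.ofFn F) := by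
  intro k
  induction k with
  | zero => intro F x _; simp [List.ofFn_zero]
  | succ n ih =>
    intro F x hx
    rw [List.ofFn_succ, List.ofFn_succ, List.sum_cons]
    exact mem_Ssum_cons.mpr ⟨x 0, hx 0, _, ih _ _ (fun i => hx i.succ), rfl⟩

lemma sum_ofFn_singletons : ∀ {k : ℕ} (e : Fin k → P × P),
    (List.ofFn fun i => ((0 : Multiset P), ({e i} : Multiset (P × P)))).sum
      = (0, ((List.ofFn e : List (P × P)) : Multiset (P × P))) := by
  intro k
  induction k with
  | zero => intro e; simp [List.ofFn_zero]; rfl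
  | succ n ih =>
    intro e
    rw [List.ofFn_succ, List.sum_cons, ih fun i => e i.succ, List.ofFn_succ,
      ← Multiset.cons_coe]
    ext <;> simp [Multiset.singleton_add]

lemma frac_mem_sem (a b : P) :
    ((0, {(a, b)}) : M P) ∈ sem (Fm0.rdiv (Fm0.prim a) (Fm0.prim b)) := by
  rintro y ⟨t, E, rfl, hch⟩
  exact ⟨t, (a, b) ::ₘ E, by ext <;> simp [Multiset.singleton_add], Chain.cons a b t E hch⟩

end LCSAux


/-- If `p1/q1, …, p_{n-1}/q_{n-1}, p_n → s` is derivable in `L+(CS)` (all types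
primitive), then there is a permutation `σ` of `{1,…,n−1}` with
`q_{σ(i)} = p_{σ(i+1)}` for `i = 1,…,n−2`, `q_{σ(n−1)} = p_n` and `p_{σ(1)} = s`.
Here `m = n - 1`, the `p`'s are indexed by `Fin (m+1)` and the `q`'s by `Fin m`
(0-based indexing). -/
theorem LCS_primitive_sequent_perm (P : Type) (m : ℕ)
    (p : Fin (m + 1) → P) (q : Fin m → P) (s : P)
    (h : Dcs P
      ((List.ofFn fun i : Fin m => Fm0.rdiv (Fm0.prim (p i.castSucc)) (Fm0.prim (q i)))
        ++ [Fm0.prim (p (Fin.last m))])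
      (Fm0.prim s)) :
    ∃ σ : Equiv.Perm (Fin m),
      (∀ i j : Fin m, (j : ℕ) = (i : ℕ) + 1 → q (σ i) = p ((σ j).castSucc)) ∧
      (∀ i : Fin m, (i : ℕ) = m - 1 → q (σ i) = p (Fin.last m)) ∧
      (∀ i : Fin m, (i : ℕ) = 0 → p ((σ i).castSucc) = s) := by
  classical
  open LCSAux in
  -- the edge function
  set e : Fin m → P × P := fun i => (p i.castSucc, q i) with he
  -- the canonical element of the interpretation of the antecedent
  have hfrac : ∀ i : Fin m,
      ((0, {e i}) : M P) ∈ sem (Fm0.rdiv (Fm0.prim (p i.castSucc)) (Fm0.prim (q i))) :=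
    fun i => frac_mem_sem _ _
  have hsum : (List.ofFn fun i : Fin m => ((0, {e i}) : M P)).sum
      ∈ Ssum (List.ofFn fun i : Fin m => Fm0.rdiv (Fm0.prim (p i.castSucc)) (Fm0.prim (q i))) :=
    ssum_ofFn _ _ hfrac
  have hlastmem : (({p (Fin.last m)}, 0) : M P) ∈ sem (Fm0.prim (p (Fin.last m))) :=
    ⟨p (Fin.last m), 0, rfl, Chain.nil _⟩
  have hz : ((({p (Fin.last m)} : Multiset P),
      ((List.ofFn e : List (P × P)) : Multiset (P × P))) : M P)
      ∈ Ssum ((List.ofFn fun i : Fin m => Fm0.rdiv (Fm0.prim (p i.castSucc)) (Fm0.prim (q i)))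
        ++ [Fm0.prim (p (Fin.last m))]) := by
    refine mem_Ssum_append.mpr ⟨_, hsum, _, mem_Ssum_singleton.mpr hlastmem, ?_⟩
    rw [sum_ofFn_singletons e]
    ext <;> simp
  have hsem := sound h _ hz
  obtain ⟨t, E, heq, hch⟩ := hsem
  rw [Prod.mk.injEq] at heq
  obtain ⟨h1, h2⟩ := heq
  rw [Multiset.singleton_inj] at h1
  subst h1
  rw [← h2] at hch
  -- extract a linked list
  obtain ⟨l, hl, hlink⟩ := chain_to_list hch
  have hperm : l.Perm (List.ofFn e) := Multiset.coe_eq_coe.mp hl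
  have hlen : l.length = m := by
    rw [hperm.length_eq, List.length_ofFn]
  have hl' : l = List.ofFn (fun i : Fin m => l.get (Fin.cast hlen.symm i)) := by
    refine List.ext_get (by simp [hlen]) ?_
    intro n h1 h2
    rw [List.get_ofFn]
    rfl
  rw [hl'] at hperm hlink
  obtain ⟨σ, hσ⟩ := exists_perm_of_ofFn_perm hperm
  rw [hσ] at hlink
  -- read off the three conditions
  have hlength : (List.ofFn (e ∘ σ)).length = m := List.length_ofFn
  have hget : ∀ i : Fin m, ∀ (hh : (i : ℕ) < (List.ofFn (e ∘ σ)).length),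
      (List.ofFn (e ∘ σ)).get ⟨i, hh⟩ = e (σ i) := by
    intro i hh
    rw [List.get_ofFn]
    exact congrArg (e ∘ σ) (by ext; simp)
  refine ⟨σ, ?_, ?_, ?_⟩
  · intro i j hij
    have h1 : (i : ℕ) < (List.ofFn (e ∘ σ)).length := by rw [hlength]; exact i.isLt
    have h2 : (i : ℕ) + 1 < (List.ofFn (e ∘ σ)).length := by rw [hlength, ← hij]; exact j.isLt
    have := linked_get_succ hlink i h1 h2
    rw [hget i h1] at this
    have hj : ((List.ofFn (e ∘ σ)).get ⟨(i : ℕ) + 1, h2⟩) = e (σ j) := by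
      have : ((⟨(i : ℕ) + 1, h2⟩ : Fin (List.ofFn (e ∘ σ)).length))
          = ⟨(j : ℕ), by rw [hlength]; exact j.isLt⟩ := by simp [Fin.ext_iff]; omega
      rw [this, hget j]
    rw [hj] at this
    exact this
  · intro i hi
    have h1 : (i : ℕ) < (List.ofFn (e ∘ σ)).length := by rw [hlength]; exact i.isLt
    have := linked_get_last hlink i h1 (by rw [hlength]; exact hi)
    rw [hget i h1] at this
    exact this
  · intro i hi
    have h1 : (0 : ℕ) < (List.ofFn (e ∘ σ)).length := by rw [hlength]; omega
    have := linked_get_zero hlink h1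
    have hi' : ((⟨(0 : ℕ), h1⟩ : Fin (List.ofFn (e ∘ σ)).length))
        = ⟨(i : ℕ), by rw [hlength]; exact i.isLt⟩ := by simp [Fin.ext_iff]; omega
    rw [hi', hget i] at this
    exact this
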